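/- arXiv:1801.01393 — 3 statements merged into one kernel-verified Lean document; each statement's English description precedes it below -/
import Mathlib

section
/- In the blowup construction: let S be a partial Steiner (m, r, r−1)-system, let V be the disjoint union of sets V_1, …, V_m each of size d, and let H be the r-graph on V whose edges are all r-subsets contained in some V_i, together with, for each edge e = {i_1,…,i_r} of S, all transversal r-sets {v_1,…,v_r} with v_j ∈ V_{i_j}. Then Δ_{r−1}(H) = d. -/
open Finset

/-- `H` is an `r`-uniform hypergraph: every edge has `r` vertices. -/
def isUniform (r : ℕ) {V : Type*} [DecidableEq V] (H : Finset (Finset V)) : Prop :=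
  ∀ e ∈ H, e.card = r

/-- The degree of a vertex set `S`: the number of edges containing `S`. -/
def degH {V : Type*} [DecidableEq V] (H : Finset (Finset V)) (S : Finset V) : ℕ :=
  (H.filter fun e => S ⊆ e).card

/-- The maximum `ℓ`-degree `Δ_ℓ(H)`. -/
def maxDeg {V : Type*} [DecidableEq V] [Fintype V] (H : Finset (Finset V)) (ℓ : ℕ) : ℕ :=
  ((univ : Finset V).powersetCard ℓ).sup (degH H)

/-- The minimum `ℓ`-degree `δ_ℓ(H)`. -/
noncomputable def minDeg {V : Type*} [DecidableEq V] (H : Finset (Finset V)) (ℓ : ℕ) : ℕ :=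
  sInf {k | ∃ S : Finset V, S.card = ℓ ∧ degH H S = k}

/-- `I` is an independent set of `H`: it contains no edge. -/
def indep {V : Type*} [DecidableEq V] (H : Finset (Finset V)) (I : Finset V) : Prop :=
  ∀ e ∈ H, ¬ e ⊆ I

/-- The independence number `α(H)`. -/
def alphaH {V : Type*} [DecidableEq V] [Fintype V] (H : Finset (Finset V)) : ℕ :=
  (((univ : Finset V).powerset).filter fun I => ∀ e ∈ H, ¬ e ⊆ I).sup Finset.card

/-- The blowup of an `r`-graph `S` on `[m]` with parts of size `d`: edges are all `r`-subsets
inside a single part together with all transversal `r`-sets over edges of `S`. -/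
def blowup (r m d : ℕ) (S : Finset (Finset (Fin m))) : Finset (Finset (Fin m × Fin d)) :=
  ((univ : Finset (Fin m × Fin d)).powersetCard r).filter
    (fun e => (∃ i : Fin m, ∀ v ∈ e, v.1 = i) ∨ e.image Prod.fst ∈ S)

/-- If `S` is a nonempty partial Steiner `(m, r, r−1)`-system, `r ≥ 3` and
`d ≥ r`, then the blowup `H` with parts of size `d` satisfies `Δ_{r−1}(H) = d`. -/
theorem stmt4 {r m d : ℕ} (hr : 3 ≤ r) (hd : r ≤ d)
    (S : Finset (Finset (Fin m))) (hS : S.Nonempty) (hSu : isUniform r S)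
    (hSteiner : ∀ T : Finset (Fin m), T.card = r - 1 → (S.filter fun e => T ⊆ e).card ≤ 1) :
    maxDeg (blowup r m d S) (r - 1) = d := by
  classical
  set H := blowup r m d S with hH
  have hmem : ∀ e : Finset (Fin m × Fin d), e ∈ H ↔ e.card = r ∧
      ((∃ i : Fin m, ∀ v ∈ e, v.1 = i) ∨ e.image Prod.fst ∈ S) := by
    intro e
    simp [hH, blowup, Finset.mem_filter, Finset.mem_powersetCard]
  -- Upper bound
  have hub : ∀ T ∈ (univ : Finset (Fin m × Fin d)).powersetCard (r-1), degH H T ≤ d := by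
    intro T hT
    rw [mem_powersetCard] at hT
    obtain ⟨-, hTc⟩ := hT
    set W := (univ : Finset (Fin m × Fin d)).filter (fun v => v ∉ T ∧ insert v T ∈ H) with hW
    have h1 : degH H T ≤ W.card := by
      unfold degH
      apply Finset.card_le_card_of_surjOn (fun v => insert v T)
      intro e he
      simp only [Finset.coe_filter, Set.mem_setOf_eq] at he
      obtain ⟨heH, hTe⟩ := he
      have hec : e.card = r := ((hmem e).1 heH).1
      have hsd : (e \ T).card = 1 := by rw [card_sdiff_of_subset hTe]; omega
      obtain ⟨v, hv⟩ := card_eq_one.1 hsd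
      have hvmem : v ∈ e \ T := hv ▸ mem_singleton_self v
      rw [mem_sdiff] at hvmem
      have hins : insert v T = e := by
        rw [Finset.insert_eq, ← hv, sdiff_union_of_subset hTe]
      refine ⟨v, ?_, hins⟩
      simp only [hW, coe_filter, Set.mem_setOf_eq, mem_univ, true_and]
      exact ⟨hvmem.2, hins ▸ heH⟩
    have hTne : T.Nonempty := card_pos.1 (by omega)
    have hWprop : ∀ v ∈ W, v ∉ T ∧
        ((∃ i, ∀ u ∈ insert v T, u.1 = i) ∨ (insert v T).image Prod.fst ∈ S) := by
      intro v hv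
      rw [hW, mem_filter] at hv
      exact ⟨hv.2.1, ((hmem _).1 hv.2.2).2⟩
    have pair : ∀ v ∈ W, ∀ w ∈ W, v.1 = w.1 := by
      by_cases hcase : ∃ i, ∀ u ∈ T, u.1 = i
      · obtain ⟨i, hi⟩ := hcase
        have hfix : ∀ v ∈ W, v.1 = i := by
          intro v hv
          obtain ⟨hvT, hc⟩ := hWprop v hv
          rcases hc with ⟨j, hj⟩ | hs
          · obtain ⟨t0, ht0⟩ := hTne
            have h1 : v.1 = j := hj v (mem_insert_self _ _)
            have h2 : t0.1 = j := hj t0 (mem_insert_of_mem ht0)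
            rw [h1, ← h2, hi t0 ht0]
          · exfalso
            have hcard := hSu _ hs
            have hsub : (insert v T).image Prod.fst ⊆ insert v.1 {i} := by
              intro x hx
              simp only [mem_image] at hx
              obtain ⟨u, hu, rfl⟩ := hx
              rcases mem_insert.1 hu with rfl | hu'
              · exact mem_insert_self _ _
              · simp [hi u hu']
            have hc1 := card_le_card hsub
            have hc2 : (insert v.1 ({i} : Finset (Fin m))).card ≤ 2 := by
              calc (insert v.1 ({i} : Finset (Fin m))).card ≤ ({i} : Finset (Fin m)).card + 1 :=
                card_insert_le _ _
              _ = 2 := by simp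
            omega
        intro v hv w hw
        rw [hfix v hv, hfix w hw]
      · push_neg at hcase
        have key : ∀ v ∈ W, insert v.1 (T.image Prod.fst) ∈ S ∧ v.1 ∉ T.image Prod.fst ∧
            (T.image Prod.fst).card = r - 1 := by
          intro v hv
          obtain ⟨hvT, hc⟩ := hWprop v hv
          rcases hc with ⟨j, hj⟩ | hs
          · obtain ⟨u, hu, hne⟩ := hcase j
            exact absurd (hj u (mem_insert_of_mem hu)) hne
          · rw [Finset.image_insert] at hs
            have hfcard : (insert v.1 (T.image Prod.fst)).card = r := hSu _ hs
            have hTimle : (T.image Prod.fst).card ≤ r - 1 := hTc ▸ card_image_le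
            have hinsle : (insert v.1 (T.image Prod.fst)).card ≤ (T.image Prod.fst).card + 1 :=
              card_insert_le _ _
            have hTim : (T.image Prod.fst).card = r - 1 := by omega
            have hvnot : v.1 ∉ T.image Prod.fst := by
              intro hmemv
              rw [Finset.insert_eq_self.2 hmemv] at hfcard
              omega
            exact ⟨hs, hvnot, hTim⟩
        intro v hv w hw
        obtain ⟨hvS, hvnot, hTim⟩ := key v hv
        obtain ⟨hwS, hwnot, -⟩ := key w hw
        have hSt := hSteiner (T.image Prod.fst) hTim
        have h1 : insert v.1 (T.image Prod.fst) ∈ S.filter (fun e => T.image Prod.fst ⊆ e) :=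
          mem_filter.2 ⟨hvS, subset_insert _ _⟩
        have h2 : insert w.1 (T.image Prod.fst) ∈ S.filter (fun e => T.image Prod.fst ⊆ e) :=
          mem_filter.2 ⟨hwS, subset_insert _ _⟩
        have heq := Finset.card_le_one.1 hSt _ h1 _ h2
        have : v.1 ∈ insert w.1 (T.image Prod.fst) := heq ▸ mem_insert_self _ _
        rcases mem_insert.1 this with h | h
        · exact h
        · exact absurd h hvnot
    have hWd : W.card ≤ d := by
      rcases W.eq_empty_or_nonempty with h | ⟨v0, hv0⟩
      · simp [h]
      · have hsub : W ⊆ ({v0.1} : Finset (Fin m)) ×ˢ (univ : Finset (Fin d)) := by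
          intro v hv
          rw [mem_product, mem_singleton]
          exact ⟨pair v hv v0 hv0, mem_univ _⟩
        calc W.card ≤ _ := card_le_card hsub
        _ = d := by simp
    omega
  -- Lower bound
  have hlb : ∃ T ∈ (univ : Finset (Fin m × Fin d)).powersetCard (r-1), d ≤ degH H T := by
    obtain ⟨f, hf⟩ := hS
    have hfc : f.card = r := hSu f hf
    have hfne : f.Nonempty := card_pos.1 (by omega)
    obtain ⟨i0, hi0⟩ := hfne
    have hd0 : 0 < d := by omega
    set g : Fin m → Fin m × Fin d := fun i => (i, ⟨0, hd0⟩) with hg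
    have hginj : Function.Injective g := by
      intro a b h
      simpa [hg, Prod.ext_iff] using h
    set T := (f.erase i0).image g with hT
    have hTc : T.card = r - 1 := by
      rw [hT, card_image_of_injective _ hginj, card_erase_of_mem hi0, hfc]
    have hnotb : ∀ b : Fin d, ((i0 : Fin m), b) ∉ T := by
      intro b hb
      rw [hT, mem_image] at hb
      obtain ⟨a, ha, hab⟩ := hb
      have : a = i0 := congrArg Prod.fst hab
      exact (mem_erase.1 ha).1 this
    have hmemb : ∀ b : Fin d, insert ((i0 : Fin m), b) T ∈ H.filter (fun e => T ⊆ e) := by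
      intro b
      rw [mem_filter]
      refine ⟨(hmem _).2 ⟨?_, Or.inr ?_⟩, subset_insert _ _⟩
      · rw [card_insert_of_notMem (hnotb b), hTc]; omega
      · have him : (insert ((i0 : Fin m), b) T).image Prod.fst = f := by
          rw [Finset.image_insert, hT, Finset.image_image]
          have h1 : (f.erase i0).image (Prod.fst ∘ g) = f.erase i0 := by
            apply Finset.image_id'
          rw [h1, insert_erase hi0]
        rw [him]; exact hf
    refine ⟨T, mem_powersetCard.2 ⟨subset_univ _, hTc⟩, ?_⟩
    unfold degH
    have hinj : ∀ a ∈ (univ : Finset (Fin d)), ∀ b ∈ (univ : Finset (Fin d)),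
        insert ((i0 : Fin m), a) T = insert ((i0 : Fin m), b) T → a = b := by
      intro a _ b _ h
      have : ((i0, a) : Fin m × Fin d) ∈ insert ((i0 : Fin m), b) T := by
        rw [← h]; exact mem_insert_self _ _
      rcases mem_insert.1 this with h' | h'
      · exact congrArg Prod.snd h'
      · exact absurd h' (hnotb a)
    calc d = (univ : Finset (Fin d)).card := by simp
    _ ≤ (H.filter (fun e => T ⊆ e)).card :=
      Finset.card_le_card_of_injOn (fun b => insert ((i0 : Fin m), b) T)
        (fun b _ => hmemb b) hinj
  unfold maxDeg
  apply le_antisymm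
  · exact Finset.sup_le hub
  · obtain ⟨T, hT, hTd⟩ := hlb
    exact le_trans hTd (Finset.le_sup hT)
end

section
/- In the blowup construction: let S be a partial Steiner (m, r, r−1)-system, let V be the disjoint union of sets V_1, …, V_m each of size d ≥ r−1, and let H be the r-graph on V whose edges are all r-subsets contained in some V_i, together with all transversal r-sets corresponding to edges of S. Then the independence number satisfies α(H) = (r−1)·α(S). -/
open Finset

/-- If `S` is a partial Steiner `(m, r, r−1)`-system, `r ≥ 3` and `d ≥ r−1`,
then the blowup `H` with parts of size `d` satisfies `α(H) = (r−1)·α(S)`. -/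
theorem stmt5 {r m d : ℕ} (hr : 3 ≤ r) (hd : r - 1 ≤ d)
    (S : Finset (Finset (Fin m))) (hSu : isUniform r S)
    (hSteiner : ∀ T : Finset (Fin m), T.card = r - 1 → (S.filter fun e => T ⊆ e).card ≤ 1) :
    alphaH (blowup r m d S) = (r - 1) * alphaH S := by

  classical
  apply le_antisymm
  · -- upper bound
    apply Finset.sup_le
    intro I hI
    obtain ⟨-, hind⟩ := Finset.mem_filter.1 hI
    set A := I.image Prod.fst with hA
    have hfib : ∀ i ∈ A, (I.filter fun v => v.1 = i).card ≤ r - 1 := by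
      intro i _
      by_contra h
      push_neg at h
      have hr' : r ≤ (I.filter fun v => v.1 = i).card := by omega
      obtain ⟨e, he, hecard⟩ := Finset.exists_subset_card_eq hr'
      refine hind e ?_ (he.trans (Finset.filter_subset _ _))
      rw [blowup, Finset.mem_filter, Finset.mem_powersetCard]
      exact ⟨⟨Finset.subset_univ _, hecard⟩,
        Or.inl ⟨i, fun v hv => (Finset.mem_filter.1 (he hv)).2⟩⟩
    have hAind : A ∈ ((univ : Finset (Fin m)).powerset).filter
        fun J => ∀ e ∈ S, ¬ e ⊆ J := by
      rw [Finset.mem_filter]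
      refine ⟨Finset.mem_powerset.2 (Finset.subset_univ _), ?_⟩
      intro e heS heA
      have hf : ∀ i ∈ e, ∃ v : Fin d, (i, v) ∈ I := by
        intro i hi
        obtain ⟨p, hp, hp2⟩ := Finset.mem_image.1 (heA hi)
        exact ⟨p.2, by rwa [show (i, p.2) = p from by rw [← hp2]]⟩
      choose f hfmem using hf
      set T : Finset (Fin m × Fin d) :=
        e.attach.image (fun i => (i.1, f i.1 i.2)) with hT
      have hTcard : T.card = r := by
        rw [hT, Finset.card_image_of_injOn, Finset.card_attach, hSu e heS]
        intro a _ b _ hab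
        exact Subtype.ext (congrArg Prod.fst hab)
      have hTsub : T ⊆ I := by
        intro x hx
        obtain ⟨i, -, rfl⟩ := Finset.mem_image.1 hx
        exact hfmem i.1 i.2
      have hTimg : T.image Prod.fst = e := by
        rw [hT, Finset.image_image]
        exact Finset.attach_image_val
      refine hind T ?_ hTsub
      rw [blowup, Finset.mem_filter, Finset.mem_powersetCard]
      exact ⟨⟨Finset.subset_univ _, hTcard⟩, Or.inr (hTimg ▸ heS)⟩
    calc I.card = ∑ i ∈ A, (I.filter fun v => v.1 = i).card :=
          Finset.card_eq_sum_card_image Prod.fst I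
      _ ≤ ∑ _i ∈ A, (r - 1) := Finset.sum_le_sum hfib
      _ = A.card * (r - 1) := by rw [Finset.sum_const, smul_eq_mul]
      _ ≤ alphaH S * (r - 1) := Nat.mul_le_mul_right _ (Finset.le_sup hAind)
      _ = (r - 1) * alphaH S := mul_comm _ _
  · -- lower bound
    have hne : (((univ : Finset (Fin m)).powerset).filter
        fun J => ∀ e ∈ S, ¬ e ⊆ J).Nonempty := by
      refine ⟨∅, Finset.mem_filter.2 ⟨Finset.mem_powerset.2 (Finset.empty_subset _), ?_⟩⟩
      intro e heS hsub
      have := hSu e heS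
      have : e = ∅ := Finset.subset_empty.1 hsub
      simp [this] at *
      omega
    obtain ⟨A, hAmem, hAcard⟩ := Finset.exists_mem_eq_sup _ hne Finset.card
    obtain ⟨-, hAind⟩ := Finset.mem_filter.1 hAmem
    have hdcard : r - 1 ≤ (univ : Finset (Fin d)).card := by
      simpa using hd
    obtain ⟨J, -, hJcard⟩ := Finset.exists_subset_card_eq hdcard
    have hIind : (A ×ˢ J) ∈ (((univ : Finset (Fin m × Fin d)).powerset).filter
        fun I => ∀ e ∈ blowup r m d S, ¬ e ⊆ I) := by
      rw [Finset.mem_filter]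
      refine ⟨Finset.mem_powerset.2 (Finset.subset_univ _), ?_⟩
      intro e heH hsub
      rw [blowup, Finset.mem_filter, Finset.mem_powersetCard] at heH
      obtain ⟨⟨-, hecard⟩, hdisj⟩ := heH
      rcases hdisj with ⟨i, hi⟩ | hS'
      · have hinj : Set.InjOn Prod.snd (e : Set (Fin m × Fin d)) := by
          intro a ha b hb hab
          exact Prod.ext (by rw [hi a ha, hi b hb]) hab
        have h1 : (e.image Prod.snd).card = e.card :=
          Finset.card_image_of_injOn hinj
        have h2 : e.image Prod.snd ⊆ J := by
          intro x hx
          obtain ⟨v, hv, rfl⟩ := Finset.mem_image.1 hx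
          exact (Finset.mem_product.1 (hsub hv)).2
        have := Finset.card_le_card h2
        omega
      · refine hAind _ hS' ?_
        intro x hx
        obtain ⟨v, hv, rfl⟩ := Finset.mem_image.1 hx
        exact (Finset.mem_product.1 (hsub hv)).1
    have hA2 : alphaH S = A.card := hAcard
    have key : (r - 1) * alphaH S = (A ×ˢ J).card := by
      rw [Finset.card_product, hJcard, hA2, mul_comm]
    rw [key]
    exact Finset.le_sup hIind
end

section
/- Let r ≥ 2 and ε > 0, and suppose m is a positive integer with m ≥ 2(r−1)/ε and C(m, r−1)·e^{−ε²(m−r+1)/12} ≤ 1/2. Then every r-graph H on n ≥ m vertices contains an induced sub-r-graph H' on m vertices with Δ_{r−1}(H')/m ≤ Δ_{r−1}(H)/n + ε. -/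
open Finset

/-! ### Auxiliary lemmas -/

private lemma key_log (ε : ℝ) (h0 : 0 < ε) (h1 : ε ≤ 1) :
    ε + ε^2/12 ≤ (1+ε) * Real.log (1+ε) := by
  set s := Real.sqrt (1+ε) with hs
  have hsq : s^2 = 1+ε := Real.sq_sqrt (by linarith)
  have hs0 : 0 < s := Real.sqrt_pos.2 (by linarith)
  have hlog : Real.log (1+ε) = 2 * Real.log s := by
    rw [hs, Real.log_sqrt (by linarith)]; ring
  have hls : 1 - s⁻¹ ≤ Real.log s := by
    have := Real.log_le_sub_one_of_pos (x := 1/s) (by positivity)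
    rw [one_div, Real.log_inv] at this
    linarith
  have hs32 : s ≤ 3/2 := by nlinarith
  have hmul : 2*s^2*(1 - s⁻¹) ≤ 2*s^2*Real.log s := by
    apply mul_le_mul_of_nonneg_left hls (by positivity)
  have h2s : 2*s^2*(1-s⁻¹) = 2*s^2 - 2*s := by field_simp
  rw [hlog, ← hsq]
  have h12 : (s+1)^2 ≤ 12 := by nlinarith
  nlinarith [mul_le_mul_of_nonneg_left h12 (sq_nonneg (s-1))]

private lemma pow_mul_le_pow (x y : ℝ) (hx : 0 ≤ x) (hy : 0 ≤ y) (m : ℕ) :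
    x^m * y ≤ (((m : ℝ)*x + y)/(m+1))^(m+1) := by
  have hm1 : (0:ℝ) < (m:ℝ)+1 := by positivity
  have hw1 : (0:ℝ) ≤ (m:ℝ)/(m+1) := by positivity
  have hw2 : (0:ℝ) ≤ 1/((m:ℝ)+1) := by positivity
  have hsum : (m:ℝ)/(m+1) + 1/((m:ℝ)+1) = 1 := by field_simp
  have hgm := Real.geom_mean_le_arith_mean2_weighted hw1 hw2 hx hy hsum
  have hL : (x ^ ((m:ℝ)/(m+1)) * y ^ (1/((m:ℝ)+1)))^(m+1) = x^m * y := by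
    rw [mul_pow, ← Real.rpow_natCast (x ^ ((m:ℝ)/(m+1))) (m+1),
      ← Real.rpow_natCast (y ^ (1/((m:ℝ)+1))) (m+1),
      ← Real.rpow_mul hx, ← Real.rpow_mul hy]
    push_cast
    rw [div_mul_cancel₀ _ (ne_of_gt hm1), div_mul_cancel₀ _ (ne_of_gt hm1),
      Real.rpow_natCast, Real.rpow_one]
  calc x^m * y = (x ^ ((m:ℝ)/(m+1)) * y ^ (1/((m:ℝ)+1)))^(m+1) := hL.symm
    _ ≤ ((m:ℝ)/(m+1) * x + 1/((m:ℝ)+1) * y)^(m+1) := by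
        apply pow_le_pow_left₀ (by positivity) hgm
    _ = (((m : ℝ)*x + y)/(m+1))^(m+1) := by congr 1; field_simp

private lemma step_ineq (N D m : ℕ) (hD : 1 ≤ D) (hDN : D ≤ N) {a : ℝ} (ha : 0 ≤ a) :
    ((N-1).choose (m+1) : ℝ) * (1 + (((D:ℝ)-1)/((N:ℝ)-1)) * a)^(m+1)
      + (1+a) * (((N-1).choose m : ℝ) * (1 + (((D:ℝ)-1)/((N:ℝ)-1)) * a)^m)
    ≤ (N.choose (m+1) : ℝ) * (1 + ((D:ℝ)/N) * a)^(m+1) := by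
  have hN : 1 ≤ N := le_trans hD hDN
  have hN0 : ((N:ℝ)) ≠ 0 := by positivity
  set p1 : ℝ := ((D:ℝ)-1)/((N:ℝ)-1) with hp1
  have hp10 : 0 ≤ p1 := by
    apply div_nonneg <;> simp only [sub_nonneg] <;> exact_mod_cast (by omega : (1:ℕ) ≤ _)
  set x : ℝ := 1 + p1 * a with hxdef
  have hx0 : (0:ℝ) ≤ x := by positivity
  by_cases hmN : m + 1 ≤ N
  · set C : ℝ := (N.choose (m+1) : ℝ) with hC
    have hC0 : 0 ≤ C := by positivity
    have hnn : N * ((N-1).choose m) = N.choose (m+1) * (m+1) := by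
      have := Nat.add_one_mul_choose_eq (N-1) m
      simpa [Nat.succ_eq_add_one, Nat.sub_add_cancel hN] using this
    have hnr : ((N:ℝ)) * ((N-1).choose m : ℝ) = C * ((m:ℝ)+1) := by
      rw [hC]; exact_mod_cast hnn
    have hc1 : ((N-1).choose m : ℝ) = C * ((m:ℝ)+1) / N := by
      rw [eq_div_iff hN0]; linear_combination hnr
    have hc2 : ((N-1).choose (m+1) : ℝ) = C - C * ((m:ℝ)+1) / N := by
      have h : N.choose (m+1) = (N-1).choose m + (N-1).choose (m+1) := by
        have := Nat.choose_succ_succ' (N-1) m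
        simpa [Nat.succ_eq_add_one, Nat.sub_add_cancel hN] using this
      have h' : C = ((N-1).choose m : ℝ) + ((N-1).choose (m+1) : ℝ) := by
        rw [hC]; exact_mod_cast h
      rw [← hc1]; linarith
    set y : ℝ := (1 - ((m:ℝ)+1)/N)*x + (((m:ℝ)+1)/N)*(1+a) with hydef
    have h1 : ((m:ℝ)+1)/N ≤ 1 := by
      rw [div_le_one (by positivity)]; exact_mod_cast hmN
    have h2 : (0:ℝ) ≤ ((m:ℝ)+1)/N := by positivity
    have hy0 : 0 ≤ y := by
      apply add_nonneg (mul_nonneg (by linarith) hx0) (mul_nonneg h2 (by linarith))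
    have hLHS : ((N-1).choose (m+1) : ℝ) * x^(m+1) + (1+a) * (((N-1).choose m : ℝ) * x^m)
        = C * (x^m * y) := by
      rw [hc1, hc2, hydef, pow_succ]; ring
    have hS : ((m:ℝ)*x + y)/((m:ℝ)+1) = 1 + ((D:ℝ)/N)*a := by
      rcases eq_or_lt_of_le hD with hD1 | hD2
      · have hz : p1 = 0 := by rw [hp1, ← hD1]; norm_num
        have hDr : (D:ℝ) = 1 := by exact_mod_cast hD1.symm
        rw [hydef, hxdef, hz, hDr]
        field_simp
        ring
      · have hN2 : 2 ≤ N := le_trans hD2 hDN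
        have hN10 : ((N:ℝ)) - 1 ≠ 0 := by
          have : (2:ℝ) ≤ N := by exact_mod_cast hN2
          linarith
        rw [hydef, hxdef, hp1]
        field_simp
        ring
    calc ((N-1).choose (m+1) : ℝ) * x^(m+1) + (1+a) * (((N-1).choose m : ℝ) * x^m)
        = C * (x^m * y) := hLHS
      _ ≤ C * ((((m:ℝ)*x + y)/((m:ℝ)+1))^(m+1)) := by
          apply mul_le_mul_of_nonneg_left (pow_mul_le_pow x y hx0 hy0 m) hC0
      _ = C * (1 + ((D:ℝ)/N)*a)^(m+1) := by rw [hS]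
  · push_neg at hmN
    have e1 : (N-1).choose (m+1) = 0 := Nat.choose_eq_zero_of_lt (by omega)
    have e2 : (N-1).choose m = 0 := Nat.choose_eq_zero_of_lt (by omega)
    have e3 : N.choose (m+1) = 0 := Nat.choose_eq_zero_of_lt (by omega)
    rw [e1, e2, e3]
    norm_num

private lemma mgf_sum_le {α : Type*} [DecidableEq α] {θ : ℝ} (hθ : 1 ≤ θ)
    (L : Finset α) : ∀ (A : Finset α), L ⊆ A → ∀ m : ℕ,
      ∑ W ∈ A.powersetCard m, θ ^ (W ∩ L).card ≤
        (A.card.choose m : ℝ) * (1 + ((L.card : ℝ) / A.card) * (θ - 1)) ^ m := by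
  induction L using Finset.strongInduction with
  | _ L IH =>
  intro A hLA m
  have ha : (0:ℝ) ≤ θ - 1 := by linarith
  rcases L.eq_empty_or_nonempty with hLe | ⟨v, hv⟩
  · subst hLe
    simp only [inter_empty, card_empty, pow_zero, Finset.sum_const, card_powersetCard,
      Nat.cast_zero, zero_div, zero_mul, add_zero, one_pow, mul_one, nsmul_eq_mul]
    exact le_rfl
  · cases m with
    | zero =>
      simp only [powersetCard_zero, Finset.sum_singleton, empty_inter, card_empty, pow_zero,
        Nat.choose_zero_right, Nat.cast_one, one_mul]
      exact le_rfl
    | succ m =>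
      have hvA : v ∈ A := hLA hv
      set A' := A.erase v with hA'
      set L' := L.erase v with hL'
      have hvA' : v ∉ A' := notMem_erase _ _
      have hins : A = insert v A' := (insert_erase hvA).symm
      have hLA' : L' ⊆ A' := erase_subset_erase _ hLA
      have hsub : L' ⊂ L := erase_ssubset hv
      have hcards : A.card = A'.card + 1 := by
        conv_lhs => rw [hins]
        rw [card_insert_of_notMem hvA']
      have hcardL : L.card = L'.card + 1 := by
        rw [hL', card_erase_of_mem hv]
        have : 1 ≤ L.card := card_pos.2 ⟨v, hv⟩
        omega
      have hsplit : A.powersetCard (m+1)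
          = A'.powersetCard (m+1) ∪ (A'.powersetCard m).image (insert v) := by
        conv_lhs => rw [hins]
        exact powersetCard_succ_insert hvA' m
      have hdisj : Disjoint (A'.powersetCard (m+1)) ((A'.powersetCard m).image (insert v)) := by
        rw [disjoint_right]
        intro W hW hW'
        simp only [mem_image, mem_powersetCard] at hW hW'
        obtain ⟨U, hU, rfl⟩ := hW
        exact hvA' (hW'.1 (mem_insert_self v U))
      have hterm1 : ∀ W ∈ A'.powersetCard (m+1), θ ^ (W ∩ L).card = θ ^ (W ∩ L').card := by
        intro W hW
        rw [mem_powersetCard] at hW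
        have hvW : v ∉ W := fun h => hvA' (hW.1 h)
        congr 2
        ext u; simp only [mem_inter, hL', mem_erase]
        constructor
        · rintro ⟨h1, h2⟩; exact ⟨h1, ⟨fun he => hvW (he ▸ h1), h2⟩⟩
        · rintro ⟨h1, _, h3⟩; exact ⟨h1, h3⟩
      have hterm2 : ∀ W ∈ A'.powersetCard m,
          θ ^ ((insert v W) ∩ L).card = θ * θ ^ (W ∩ L').card := by
        intro W hW
        rw [mem_powersetCard] at hW
        have hvW : v ∉ W := fun h => hvA' (hW.1 h)
        have hset : (insert v W) ∩ L = insert v (W ∩ L') := by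
          ext u
          simp only [mem_inter, mem_insert, hL', mem_erase]
          constructor
          · rintro ⟨h1 | h1, h2⟩
            · exact Or.inl h1
            · exact Or.inr ⟨h1, ⟨fun he => hvW (he ▸ h1), h2⟩⟩
          · rintro (rfl | ⟨h1, _, h3⟩)
            · exact ⟨Or.inl rfl, hv⟩
            · exact ⟨Or.inr h1, h3⟩
        rw [hset, card_insert_of_notMem (fun h => hvW (mem_inter.1 h).1), pow_succ]
        ring
      have hinj : ∀ W1 ∈ A'.powersetCard m, ∀ W2 ∈ A'.powersetCard m,
          insert v W1 = insert v W2 → W1 = W2 := by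
        intro W1 h1 W2 h2 he
        rw [mem_powersetCard] at h1 h2
        have hv1 : v ∉ W1 := fun h => hvA' (h1.1 h)
        have hv2 : v ∉ W2 := fun h => hvA' (h2.1 h)
        rw [← erase_insert hv1, ← erase_insert hv2, he]
      calc ∑ W ∈ A.powersetCard (m+1), θ ^ (W ∩ L).card
          = ∑ W ∈ A'.powersetCard (m+1), θ ^ (W ∩ L).card
            + ∑ W ∈ (A'.powersetCard m).image (insert v), θ ^ (W ∩ L).card := by
            rw [hsplit, Finset.sum_union hdisj]
        _ = ∑ W ∈ A'.powersetCard (m+1), θ ^ (W ∩ L').card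
            + θ * ∑ W ∈ A'.powersetCard m, θ ^ (W ∩ L').card := by
            rw [Finset.sum_congr rfl hterm1, Finset.sum_image hinj,
              Finset.sum_congr rfl hterm2, ← Finset.mul_sum]
        _ ≤ (A'.card.choose (m+1) : ℝ) * (1 + ((L'.card : ℝ) / A'.card) * (θ - 1)) ^ (m+1)
            + θ * ((A'.card.choose m : ℝ) * (1 + ((L'.card : ℝ) / A'.card) * (θ - 1)) ^ m) := by
            have i1 := IH L' hsub A' hLA' (m+1)
            have i2 := IH L' hsub A' hLA' m
            have hθ0 : (0:ℝ) ≤ θ := by linarith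
            exact add_le_add i1 (mul_le_mul_of_nonneg_left i2 hθ0)
        _ ≤ (A.card.choose (m+1) : ℝ) * (1 + ((L.card : ℝ) / A.card) * (θ - 1)) ^ (m+1) := by
            have hst := step_ineq A.card L.card m (by omega) (card_le_card hLA) ha
            have hc1 : A.card - 1 = A'.card := by omega
            have hc2 : ((L.card : ℝ)) - 1 = (L'.card : ℝ) := by
              rw [hcardL]; push_cast; ring
            have hc3 : ((A.card : ℝ)) - 1 = (A'.card : ℝ) := by
              rw [hcards]; push_cast; ring
            rw [hc1, hc2, hc3] at hst
            have hθeq : θ = 1 + (θ - 1) := by ring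
            calc (A'.card.choose (m+1) : ℝ) * (1 + ((L'.card : ℝ) / A'.card) * (θ - 1)) ^ (m+1)
                  + θ * ((A'.card.choose m : ℝ) * (1 + ((L'.card : ℝ) / A'.card) * (θ - 1)) ^ m)
                = (A'.card.choose (m+1) : ℝ) * (1 + ((L'.card : ℝ) / A'.card) * (θ - 1)) ^ (m+1)
                  + (1 + (θ - 1)) * ((A'.card.choose m : ℝ)
                      * (1 + ((L'.card : ℝ) / A'.card) * (θ - 1)) ^ m) := by
                  rw [← hθeq]
              _ ≤ _ := hst

open Classical in
private lemma count_bound {α : Type*} [DecidableEq α] (A L : Finset α) (hLA : L ⊆ A) (m' : ℕ)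
    {ε τ : ℝ} (hε0 : 0 < ε) (hε1 : ε ≤ 1)
    (hτ : ((L.card:ℝ)/A.card) * m' + ε * m' ≤ τ) :
    (((A.powersetCard m').filter (fun W => τ < ((W ∩ L).card : ℝ))).card : ℝ)
      ≤ (A.card.choose m' : ℝ) * Real.exp (-ε^2 * m' / 12) := by
  set θ : ℝ := 1 + ε with hθdef
  have hθ1 : (1:ℝ) ≤ θ := by rw [hθdef]; linarith
  have hθ0 : (0:ℝ) < θ := by linarith
  set p : ℝ := (L.card:ℝ)/A.card with hpdef
  have hp0 : 0 ≤ p := by positivity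
  have hp1 : p ≤ 1 := by
    rcases Nat.eq_zero_or_pos A.card with h | h
    · rw [hpdef, h]; norm_num
    · rw [hpdef, div_le_one (by exact_mod_cast h)]
      exact_mod_cast card_le_card hLA
  set Lg : ℝ := Real.log θ with hLgdef
  have hlog1 : Lg ≤ ε := by
    have := Real.log_le_sub_one_of_pos hθ0
    rw [hLgdef]; linarith
  have hlogk : ε + ε^2/12 ≤ θ * Lg := key_log ε hε0 hε1
  have hτpos : 0 ≤ τ := le_trans (by positivity) hτ
  set c := (((A.powersetCard m').filter (fun W => τ < ((W ∩ L).card : ℝ))).card : ℝ) with hcdef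
  have hrp : (0:ℝ) < θ ^ τ := Real.rpow_pos_of_pos hθ0 τ
  have step1 : c * θ ^ τ ≤ ∑ W ∈ A.powersetCard m', θ ^ (W ∩ L).card := by
    have hcc : c * θ ^ τ = ∑ _W ∈ (A.powersetCard m').filter (fun W => τ < ((W ∩ L).card : ℝ)),
        θ ^ τ := by
      rw [Finset.sum_const, hcdef, nsmul_eq_mul]
    rw [hcc]
    apply le_trans (Finset.sum_le_sum (f := fun _W => θ ^ τ)
      (g := fun W => θ ^ (W ∩ L).card) ?_)
    · apply Finset.sum_le_sum_of_subset_of_nonneg (Finset.filter_subset _ _)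
      intro W _ _
      positivity
    · intro W hW
      rw [Finset.mem_filter] at hW
      have h2 : θ ^ τ ≤ θ ^ (((W ∩ L).card : ℕ) : ℝ) :=
        Real.rpow_le_rpow_of_exponent_le hθ1 (le_of_lt hW.2)
      rwa [Real.rpow_natCast] at h2
  have step2 := mgf_sum_le hθ1 L A hLA m'
  have hθ1' : θ - 1 = ε := by rw [hθdef]; ring
  rw [hθ1'] at step2
  have step3 : (1 + p * ε) ^ m' ≤ Real.exp (-ε^2 * m' / 12) * θ ^ τ := by
    have hb : (1 + p * ε) ^ m' ≤ Real.exp (p * ε * m') := by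
      calc (1 + p * ε) ^ m' ≤ (Real.exp (p * ε)) ^ m' := by
            apply pow_le_pow_left₀ (by positivity)
            have := Real.add_one_le_exp (p*ε)
            linarith
        _ = Real.exp (p * ε * m') := by rw [← Real.exp_nat_mul]; ring_nf
    have hrw : θ ^ τ = Real.exp (τ * Lg) := by
      rw [Real.rpow_def_of_pos hθ0, hLgdef]; ring_nf
    rw [hrw, ← Real.exp_add]
    apply le_trans hb
    apply Real.exp_le_exp.2
    have hLgpos : 0 < Lg := Real.log_pos (by rw [hθdef]; linarith)
    have hτ2 : (p * m' + ε * m') * Lg ≤ τ * Lg := by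
      apply mul_le_mul_of_nonneg_right _ (le_of_lt hLgpos)
      calc p * m' + ε * m' = p * m' + ε * m' := rfl
        _ ≤ τ := hτ
    have hm0 : (0:ℝ) ≤ (m' : ℝ) := Nat.cast_nonneg _
    have t1 : Lg - ε ≤ p * Lg - p * ε := by
      nlinarith [mul_nonneg (sub_nonneg.2 hp1) (sub_nonneg.2 hlog1)]
    nlinarith [mul_le_mul_of_nonneg_right hlogk hm0, mul_le_mul_of_nonneg_right t1 hm0]
  have hCnn : (0:ℝ) ≤ (A.card.choose m' : ℝ) := Nat.cast_nonneg _
  have final : c * θ ^ τ ≤ ((A.card.choose m' : ℝ) * Real.exp (-ε^2 * m' / 12)) * θ ^ τ := by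
    calc c * θ ^ τ ≤ (A.card.choose m' : ℝ) * (1 + p * ε) ^ m' := le_trans step1 step2
      _ ≤ (A.card.choose m' : ℝ) * (Real.exp (-ε^2 * m' / 12) * θ ^ τ) :=
          mul_le_mul_of_nonneg_left step3 hCnn
      _ = ((A.card.choose m' : ℝ) * Real.exp (-ε^2 * m' / 12)) * θ ^ τ := by ring
  exact le_of_mul_le_mul_right final hrp

private lemma arith_tau {d D nn mm kk ε : ℝ} (hd : 0 ≤ d) (hdD : d ≤ D)
    (hk : 0 ≤ kk) (hkn : kk < nn) (hkm : kk ≤ mm) (hmn : mm ≤ nn) (hε : 0 < ε) :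
    d/(nn-kk)*(mm-kk) + ε*(mm-kk) ≤ (D/nn + ε)*mm := by
  have hn0 : 0 < nn := lt_of_le_of_lt hk hkn
  have hx : 0 < nn - kk := by linarith
  have hy : 0 ≤ mm - kk := by linarith
  have hD : 0 ≤ D := le_trans hd hdD
  have hA1 : d/(nn-kk)*(mm-kk) ≤ D/nn*mm := by
    rw [div_mul_eq_mul_div, div_mul_eq_mul_div, div_le_div_iff₀ hx hn0]
    nlinarith [mul_nonneg (mul_nonneg hD hk) (sub_nonneg.2 hmn),
      mul_le_mul_of_nonneg_right hdD (mul_nonneg hy (le_of_lt hn0))]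
  nlinarith

private lemma deg_filter {r : ℕ} (hr : 1 ≤ r) {V : Type*} [DecidableEq V]
    (H : Finset (Finset V)) (hH : isUniform r H)
    (S : Finset V) (hS : S.card = r - 1) (W : Finset V) (hSW : S ⊆ W) :
    degH (H.filter (fun e => e ⊆ W)) S
      = ((W.filter (fun v => v ∉ S ∧ insert v S ∈ H))).card := by
  rw [degH, Finset.filter_filter]
  apply (Finset.card_bij (fun v _ => insert v S) ?_ ?_ ?_).symm
  · intro v hv
    rw [Finset.mem_filter] at hv ⊢
    obtain ⟨hvW, hvS, hvH⟩ := hv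
    refine ⟨hvH, ?_, subset_insert _ _⟩
    intro u hu
    rcases Finset.mem_insert.1 hu with rfl | hu
    · exact hvW
    · exact hSW hu
  · intro v1 hv1 v2 hv2 he
    rw [Finset.mem_filter] at hv1 hv2
    have he' : insert v1 S = insert v2 S := he
    have : v1 ∈ insert v2 S := he' ▸ Finset.mem_insert_self v1 S
    rcases Finset.mem_insert.1 this with h | h
    · exact h
    · exact absurd h hv1.2.1
  · intro e he
    rw [Finset.mem_filter] at he
    obtain ⟨heH, heW, hSe⟩ := he
    have hcard : (e \ S).card = 1 := by
      rw [Finset.card_sdiff_of_subset hSe, hH e heH, hS]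
      omega
    obtain ⟨v, hv⟩ := Finset.card_eq_one.1 hcard
    have hve : v ∈ e ∧ v ∉ S := by
      have : v ∈ e \ S := hv ▸ Finset.mem_singleton_self v
      exact ⟨(Finset.mem_sdiff.1 this).1, (Finset.mem_sdiff.1 this).2⟩
    have hee : insert v S = e := by
      rw [← Finset.sdiff_union_of_subset hSe, hv, Finset.insert_eq]
    refine ⟨v, ?_, hee⟩
    rw [Finset.mem_filter]
    exact ⟨heW hve.1, hve.2, hee ▸ heH⟩

private lemma deg_filter_zero {V : Type*} [DecidableEq V]
    (H : Finset (Finset V)) (S : Finset V) (W : Finset V) (hSW : ¬ S ⊆ W) :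
    degH (H.filter (fun e => e ⊆ W)) S = 0 := by
  rw [degH, Finset.card_eq_zero, Finset.filter_eq_empty_iff]
  intro e he
  rw [Finset.mem_filter] at he
  intro hSe
  exact hSW (hSe.trans he.2)

set_option maxHeartbeats 1000000 in
/-- **Mubayi–Zhao lemma.** Let `r ≥ 2`, `ε > 0` and `m ≥ 2(r−1)/ε` with
`C(m, r−1)·e^{−ε²(m−r+1)/12} ≤ 1/2`. Then every `r`-graph `H` on `n ≥ m` vertices has an
induced sub-`r`-graph `H'` on `m` vertices with `Δ_{r−1}(H')/m ≤ Δ_{r−1}(H)/n + ε`. -/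
theorem stmt9 {r : ℕ} (hr : 2 ≤ r) (ε : ℝ) (hε : 0 < ε) (m : ℕ) (hm : 0 < m)
    (h1 : 2 * ((r : ℝ) - 1) / ε ≤ (m : ℝ))
    (h2 : (m.choose (r - 1) : ℝ) * Real.exp (-ε^2 * ((m : ℝ) - r + 1) / 12) ≤ 1/2)
    {n : ℕ} (hnm : m ≤ n) (H : Finset (Finset (Fin n))) (hH : isUniform r H) :
    ∃ W : Finset (Fin n), W.card = m ∧
      (maxDeg (H.filter fun e => e ⊆ W) (r - 1) : ℝ) / m ≤
        (maxDeg H (r - 1) : ℝ) / n + ε := by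
  classical
  set k := r - 1 with hkdef
  have hk1 : 1 ≤ k := by omega
  have hr1 : 1 ≤ r := by omega
  set Δ := maxDeg H k with hΔdef
  have hn0 : 0 < n := lt_of_lt_of_le hm hnm
  have hnR : (0:ℝ) < n := by exact_mod_cast hn0
  have hmR : (0:ℝ) < m := by exact_mod_cast hm
  have hΔdiv : (0:ℝ) ≤ (Δ:ℝ)/n := by positivity
  set τ : ℝ := ((Δ:ℝ)/(n:ℝ) + ε) * m with hτdef
  have hτpos : 0 < τ := mul_pos (by linarith) hmR
  have hkR : ((k:ℕ):ℝ) = (r:ℝ) - 1 := by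
    rw [hkdef, Nat.cast_sub hr1, Nat.cast_one]
  suffices hsuf : ∃ W : Finset (Fin n), W.card = m ∧
      (maxDeg (H.filter fun e => e ⊆ W) k : ℝ) ≤ τ by
    obtain ⟨W, hWc, hWd⟩ := hsuf
    exact ⟨W, hWc, by rw [div_le_iff₀ hmR]; exact hWd⟩
  by_cases hbig : 1 ≤ (Δ:ℝ)/n + ε
  · -- trivial branch
    obtain ⟨W, hWsub, hWcard⟩ := Finset.exists_subset_card_eq (s := (univ : Finset (Fin n))) (n := m)
      (by simpa using hnm)
    refine ⟨W, hWcard, ?_⟩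
    have hsup : maxDeg (H.filter fun e => e ⊆ W) k ≤ m := by
      apply Finset.sup_le
      intro S hS
      rw [Finset.mem_powersetCard] at hS
      by_cases hSW : S ⊆ W
      · rw [deg_filter hr1 H hH S (hS.2.trans hkdef) W hSW]
        calc (W.filter _).card ≤ W.card := Finset.card_filter_le _ _
          _ = m := hWcard
      · rw [deg_filter_zero H S W hSW]
        exact Nat.zero_le m
    calc (maxDeg (H.filter fun e => e ⊆ W) k : ℝ) ≤ (m : ℝ) := by exact_mod_cast hsup
      _ = 1 * m := (one_mul _).symm
      _ ≤ ((Δ:ℝ)/n + ε) * m := mul_le_mul_of_nonneg_right hbig (le_of_lt hmR)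
  · -- main branch
    push_neg at hbig
    have hε1 : ε ≤ 1 := by linarith
    have hr2R : (2:ℝ) ≤ (r:ℝ) := by exact_mod_cast hr
    have h2k : 2*((r:ℝ)-1) ≤ (m:ℝ) := by
      have : 2*((r:ℝ)-1) ≤ 2*((r:ℝ)-1)/ε := by
        rw [le_div_iff₀ hε]
        nlinarith
      linarith
    have hkm : k < m := by
      have : ((k:ℕ):ℝ) < (m:ℝ) := by rw [hkR]; nlinarith
      exact_mod_cast this
    have hkn : k < n := lt_of_lt_of_le hkm hnm
    have hmkR : ((m - k:ℕ):ℝ) = (m:ℝ) - k := by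
      rw [Nat.cast_sub (le_of_lt hkm)]
    have hnkR : ((n - k:ℕ):ℝ) = (n:ℝ) - k := by
      rw [Nat.cast_sub (le_of_lt hkn)]
    set T := (univ : Finset (Fin n)).powersetCard k with hT
    set P := (univ : Finset (Fin n)).powersetCard m with hP
    set E : ℝ := Real.exp (-ε^2 * (((m - k : ℕ)):ℝ) / 12) with hE
    have hE2 : (m.choose k : ℝ) * E ≤ 1/2 := by
      have hexp : (((m - k:ℕ)):ℝ) = (m:ℝ) - (r:ℝ) + 1 := by
        rw [hmkR, hkR]; ring
      rw [hE, hexp]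
      exact h2
    have hEpos : 0 < E := Real.exp_pos _
    -- the per-S counting bound
    have hper : ∀ S ∈ T, ((P.filter (fun W => S ⊆ W ∧
        τ < ((W.filter (fun v => v ∉ S ∧ insert v S ∈ H)).card : ℝ))).card : ℝ)
        ≤ ((n-k).choose (m-k) : ℝ) * E := by
      intro S hS
      have hScard : S.card = k := (Finset.mem_powersetCard.1 hS).2
      have hLsub : (univ.filter (fun v => v ∉ S ∧ insert v S ∈ H) : Finset (Fin n)) ⊆ Sᶜ := by
        intro v hv
        rw [Finset.mem_filter] at hv
        rw [Finset.mem_compl]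
        exact hv.2.1
      have hcompl : (Sᶜ : Finset (Fin n)).card = n - k := by
        rw [Finset.card_compl, hScard, Fintype.card_fin]
      -- injection into the compl-world
      have hinj : (P.filter (fun W => S ⊆ W ∧
          τ < ((W.filter (fun v => v ∉ S ∧ insert v S ∈ H)).card : ℝ))).card
          ≤ (((Sᶜ : Finset (Fin n)).powersetCard (m-k)).filter
              (fun W' => τ < ((W' ∩ (univ.filter (fun v => v ∉ S ∧ insert v S ∈ H))).card : ℝ))).card := by
        apply Finset.card_le_card_of_injOn (fun W => W \ S)
        · intro W hW
          simp only [Finset.mem_coe] at hW ⊢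
          rw [Finset.mem_filter] at hW
          obtain ⟨hWP, hSW, hWτ⟩ := hW
          have hWcard : W.card = m := (Finset.mem_powersetCard.1 hWP).2
          rw [Finset.mem_filter, Finset.mem_powersetCard]
          refine ⟨⟨?_, ?_⟩, ?_⟩
          · intro v hv
            rw [Finset.mem_sdiff] at hv
            rw [Finset.mem_compl]
            exact hv.2
          · rw [Finset.card_sdiff_of_subset hSW, hWcard, hScard]
          · have hset : (W \ S) ∩ (univ.filter (fun v => v ∉ S ∧ insert v S ∈ H))
                = W.filter (fun v => v ∉ S ∧ insert v S ∈ H) := by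
              ext v
              simp only [Finset.mem_inter, Finset.mem_sdiff, Finset.mem_filter, Finset.mem_univ,
                true_and]
              tauto
            rw [hset]
            exact hWτ
        · intro W1 h1 W2 h2 he
          simp only [Finset.coe_filter, Set.mem_setOf_eq] at h1 h2
          have he' : W1 \ S = W2 \ S := he
          have e1 : W1 \ S ∪ S = W1 := Finset.sdiff_union_of_subset h1.2.1
          have e2 : W2 \ S ∪ S = W2 := Finset.sdiff_union_of_subset h2.2.1
          rw [← e1, ← e2, he']
      -- apply the Chernoff count bound
      have hτS : (((univ.filter (fun v => v ∉ S ∧ insert v S ∈ H) : Finset (Fin n)).card : ℝ)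
          / ((Sᶜ : Finset (Fin n)).card) * ((m-k : ℕ) : ℝ) + ε * ((m-k : ℕ):ℝ)) ≤ τ := by
        have hdeg : (univ.filter (fun v => v ∉ S ∧ insert v S ∈ H) : Finset (Fin n)).card
            = degH H S := by
          have := deg_filter hr1 H hH S (hScard.trans hkdef) univ (Finset.subset_univ S)
          rw [Finset.filter_true_of_mem (fun e _ => Finset.subset_univ e)] at this
          exact this.symm
        have hdΔ : degH H S ≤ Δ := by
          rw [hΔdef, maxDeg]
          exact Finset.le_sup hS
        have hdR : ((univ.filter (fun v => v ∉ S ∧ insert v S ∈ H) : Finset (Fin n)).card : ℝ)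
            ≤ (Δ:ℝ) := by
          rw [hdeg]; exact_mod_cast hdΔ
        rw [hcompl, hmkR, hnkR, hτdef]
        apply arith_tau (Nat.cast_nonneg _) hdR (Nat.cast_nonneg _)
        · exact_mod_cast hkn
        · exact_mod_cast le_of_lt hkm
        · exact_mod_cast hnm
        · exact hε
      have hcb := count_bound (Sᶜ : Finset (Fin n))
        (univ.filter (fun v => v ∉ S ∧ insert v S ∈ H)) hLsub (m-k) hε hε1 hτS
      rw [hcompl] at hcb
      calc ((P.filter (fun W => S ⊆ W ∧
            τ < ((W.filter (fun v => v ∉ S ∧ insert v S ∈ H)).card : ℝ))).card : ℝ)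
          ≤ ((((Sᶜ : Finset (Fin n)).powersetCard (m-k)).filter
              (fun W' => τ < ((W' ∩ (univ.filter (fun v => v ∉ S ∧ insert v S ∈ H))).card : ℝ))).card : ℝ) := by
            exact_mod_cast hinj
        _ ≤ ((n-k).choose (m-k) : ℝ) * E := by rw [hE]; exact hcb
    -- double counting
    have hswap : ∑ W ∈ P, (T.filter (fun S => S ⊆ W ∧
          τ < ((W.filter (fun v => v ∉ S ∧ insert v S ∈ H)).card : ℝ))).card
        = ∑ S ∈ T, (P.filter (fun W => S ⊆ W ∧
          τ < ((W.filter (fun v => v ∉ S ∧ insert v S ∈ H)).card : ℝ))).card := by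
      simp_rw [Finset.card_filter]
      exact Finset.sum_comm
    have hTcard : T.card = n.choose k := by
      rw [hT, Finset.card_powersetCard, Finset.card_univ, Fintype.card_fin]
    have hPcard : P.card = n.choose m := by
      rw [hP, Finset.card_powersetCard, Finset.card_univ, Fintype.card_fin]
    have hchoose : (n.choose k : ℝ) * ((n-k).choose (m-k) : ℝ) = (n.choose m : ℝ) * (m.choose k : ℝ) := by
      have := Nat.choose_mul (n := n) (k := m) (le_of_lt hkm)
      exact_mod_cast this.symm
    have hNm : (0:ℝ) < (n.choose m : ℝ) := by
      exact_mod_cast Nat.choose_pos hnm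
    have htotR : (∑ W ∈ P, ((T.filter (fun S => S ⊆ W ∧
          τ < ((W.filter (fun v => v ∉ S ∧ insert v S ∈ H)).card : ℝ))).card : ℝ))
        < (n.choose m : ℝ) := by
      calc ∑ W ∈ P, ((T.filter (fun S => S ⊆ W ∧
            τ < ((W.filter (fun v => v ∉ S ∧ insert v S ∈ H)).card : ℝ))).card : ℝ)
          = ∑ S ∈ T, ((P.filter (fun W => S ⊆ W ∧
            τ < ((W.filter (fun v => v ∉ S ∧ insert v S ∈ H)).card : ℝ))).card : ℝ) := by
            exact_mod_cast congrArg (Nat.cast (R := ℝ)) hswap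
        _ ≤ ∑ _S ∈ T, ((n-k).choose (m-k) : ℝ) * E := Finset.sum_le_sum hper
        _ = (n.choose k : ℝ) * (((n-k).choose (m-k) : ℝ) * E) := by
            rw [Finset.sum_const, hTcard, nsmul_eq_mul]
        _ = (n.choose m : ℝ) * ((m.choose k : ℝ) * E) := by
            rw [← mul_assoc, hchoose]; ring
        _ ≤ (n.choose m : ℝ) * (1/2) := by
            apply mul_le_mul_of_nonneg_left hE2 (le_of_lt hNm)
        _ < (n.choose m : ℝ) := by linarith
    have htot : ∑ W ∈ P, (T.filter (fun S => S ⊆ W ∧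
          τ < ((W.filter (fun v => v ∉ S ∧ insert v S ∈ H)).card : ℝ))).card
        < ∑ _W ∈ P, 1 := by
      rw [Finset.sum_const, smul_eq_mul, mul_one, hPcard]
      exact_mod_cast htotR
    obtain ⟨W, hWP, hWlt⟩ := Finset.exists_lt_of_sum_lt htot
    have hbadW : T.filter (fun S => S ⊆ W ∧
        τ < ((W.filter (fun v => v ∉ S ∧ insert v S ∈ H)).card : ℝ)) = ∅ :=
      Finset.card_eq_zero.1 (by omega)
    have hWcard : W.card = m := (Finset.mem_powersetCard.1 hWP).2
    refine ⟨W, hWcard, ?_⟩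
    have hTne : T.Nonempty := by
      rw [hT]
      apply Finset.powersetCard_nonempty.2
      simpa using le_of_lt hkn
    obtain ⟨S₀, hS₀, hsup0⟩ := Finset.exists_mem_eq_sup T hTne
      (degH (H.filter fun e => e ⊆ W))
    have hdegle : ∀ S ∈ T, ((degH (H.filter fun e => e ⊆ W) S : ℕ) : ℝ) ≤ τ := by
      intro S hS
      have hScard : S.card = k := (Finset.mem_powersetCard.1 hS).2
      by_cases hSW : S ⊆ W
      · rw [deg_filter hr1 H hH S (hScard.trans hkdef) W hSW]
        have hnotmem : S ∉ T.filter (fun S => S ⊆ W ∧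
            τ < ((W.filter (fun v => v ∉ S ∧ insert v S ∈ H)).card : ℝ)) := by
          rw [hbadW]; exact Finset.notMem_empty S
        rw [Finset.mem_filter] at hnotmem
        push_neg at hnotmem
        exact hnotmem hS hSW
      · rw [deg_filter_zero H S W hSW]
        exact_mod_cast le_of_lt hτpos
    calc (maxDeg (H.filter fun e => e ⊆ W) k : ℝ)
        = ((degH (H.filter fun e => e ⊆ W) S₀ : ℕ) : ℝ) := by
          rw [maxDeg, ← hT, hsup0]
      _ ≤ τ := hdegle S₀ hS₀
end
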